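/- For any binary sequence x of even length ℓ, and constants 0 ≤ p₁ < 1/2 < p₂ ≤ 1 with k = (p₂ - p₁)ℓ an integer, there exists an index t in the set S = {0, ℓ} ∪ {ik : i ≥ 1, ik < ℓ} such that the sequence obtained by flipping the first t bits of x has weight in the interval [p₁ℓ, p₂ℓ]. -/

import Mathlib

/-- Hamming weight of a binary sequence. -/
def wt (l : List Bool) : ℕ := l.count true

/-- Flip the first `t` bits of a binary sequence. -/
def flipFirst (t : ℕ) (l : List Bool) : List Bool :=
  (l.take t).map (fun b => !b) ++ l.drop t

lemma count_map_not (l : List Bool) :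
    (l.map (fun b => !b)).count true + l.count true = l.length := by
  induction l with
  | nil => simp
  | cons b l ih => cases b <;> simp [List.count_cons, ih] <;> omega

lemma wt_flipFirst (t : ℕ) (x : List Bool) :
    (wt (flipFirst t x) : ℤ) = min t x.length + wt x - 2 * (x.take t).count true := by
  have h1 : wt (flipFirst t x) =
      ((x.take t).map (fun b => !b)).count true + (x.drop t).count true := by
    simp [wt, flipFirst, List.count_append]
  have h2 := count_map_not (x.take t)
  have h3 : (x.take t).count true + (x.drop t).count true = wt x := by
    rw [wt, ← List.count_append, List.take_append_drop]
  have h4 : (x.take t).length = min t x.length := List.length_take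
  omega

lemma count_take_split (t u : ℕ) (htu : t ≤ u) (x : List Bool) :
    (x.take u).count true = (x.take t).count true + ((x.take u).drop t).count true := by
  conv_lhs => rw [← List.take_append_drop t (x.take u)]
  rw [List.count_append, List.take_take, min_eq_left htu]

lemma wt_step (t u : ℕ) (htu : t ≤ u) (x : List Bool) :
    |(wt (flipFirst u x) : ℤ) - wt (flipFirst t x)| ≤ min u x.length - min t x.length := by
  have hsplit := count_take_split t u htu x
  have hlen : ((x.take u).drop t).length = min u x.length - t := by
    simp [List.length_drop, List.length_take]
  have hc : ((x.take u).drop t).count true ≤ min u x.length - t := by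
    rw [← hlen]; exact List.count_le_length
  have hmt : min t x.length ≤ t := min_le_left _ _
  have hmm : min t x.length ≤ min u x.length := by omega
  rw [wt_flipFirst, wt_flipFirst, abs_le]
  omega

lemma ivt (g : ℕ → ℝ) (lo hi : ℝ) (M : ℕ)
    (hstep : ∀ i < M, |g (i+1) - g i| ≤ hi - lo)
    (h0 : g 0 < lo) (hM : lo ≤ g M) :
    ∃ i ≤ M, lo ≤ g i ∧ g i ≤ hi := by
  classical
  have hex : ∃ j, lo ≤ g j := ⟨M, hM⟩
  set j := Nat.find hex with hjdef
  have hj : lo ≤ g j := Nat.find_spec hex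
  have hjM : j ≤ M := Nat.find_min' hex hM
  have hj0 : j ≠ 0 := by
    intro h; rw [h] at hj; linarith
  have hprev : ¬ lo ≤ g (j-1) := Nat.find_min hex (by omega)
  push_neg at hprev
  refine ⟨j, hjM, hj, ?_⟩
  have hs := hstep (j-1) (by omega)
  have hj1 : j - 1 + 1 = j := by omega
  rw [hj1, abs_le] at hs
  linarith [hs.2]

theorem stmt0 (ℓ k : ℕ) (hℓ : Even ℓ) (p₁ p₂ : ℝ)
    (hp₁ : 0 ≤ p₁) (h₁ : p₁ < 1/2) (h₂ : (1:ℝ)/2 < p₂) (hp₂ : p₂ ≤ 1)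
    (hk : (k : ℝ) = (p₂ - p₁) * ℓ)
    (x : List Bool) (hx : x.length = ℓ) :
    ∃ t : ℕ, (t = 0 ∨ t = ℓ ∨ ∃ i : ℕ, 1 ≤ i ∧ t = i * k ∧ i * k < ℓ) ∧
      p₁ * ℓ ≤ (wt (flipFirst t x) : ℝ) ∧ (wt (flipFirst t x) : ℝ) ≤ p₂ * ℓ := by
  rcases Nat.eq_zero_or_pos ℓ with h0 | hpos
  · subst h0
    have hxe : x = [] := List.eq_nil_of_length_eq_zero hx
    subst hxe
    refine ⟨0, Or.inl rfl, ?_, ?_⟩ <;> simp [wt, flipFirst]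
  have hℓR : (0:ℝ) < ℓ := by exact_mod_cast hpos
  have hk1 : 1 ≤ k := by
    rcases Nat.eq_zero_or_pos k with h | h
    · exfalso; rw [h] at hk
      push_cast at hk
      nlinarith
    · exact h
  set lo := p₁ * ℓ with hlo
  set hi := p₂ * ℓ with hhi
  have hgap : hi - lo = k := by rw [hk]; ring
  have hhalf1 : 2 * lo < ℓ := by rw [hlo]; nlinarith
  have hhalf2 : (ℓ:ℝ) < 2 * hi := by rw [hhi]; nlinarith
  set g : ℕ → ℝ := fun t => (wt (flipFirst t x) : ℝ) with hg
  -- g 0 = wt x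
  have hg0 : g 0 = wt x := by
    simp [hg, flipFirst, wt]
  have hwz := wt_flipFirst ℓ x
  have hcount : (x.take ℓ).count true = wt x := by
    rw [← hx, List.take_length]; rfl
  have hgl : g ℓ + g 0 = ℓ := by
    have : (wt (flipFirst ℓ x) : ℤ) = ℓ - wt x := by
      rw [hwz, hcount, hx, min_self]; ring
    have hR : (wt (flipFirst ℓ x) : ℝ) = ℓ - wt x := by exact_mod_cast this
    rw [hg0]; simp only [hg]; rw [hR]; ring
  -- the walk
  set G : ℕ → ℝ := fun i => g (min (i * k) ℓ) with hG
  have hG0 : G 0 = g 0 := by simp [hG]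
  have hGM : G ℓ = g ℓ := by
    have : min (ℓ * k) ℓ = ℓ := by
      have : ℓ ≤ ℓ * k := Nat.le_mul_of_pos_right ℓ (by omega)
      omega
    simp [hG, this]
  have hstep : ∀ i < ℓ, |G (i+1) - G i| ≤ hi - lo := by
    intro i _
    have h1 : (i+1) * k = i * k + k := by ring
    have hle : min (i * k) ℓ ≤ min (i * k + k) ℓ := by omega
    have hz := wt_step (min (i * k) ℓ) (min (i * k + k) ℓ) hle x
    rw [hx] at hz
    have hz2 : |(wt (flipFirst (min (i * k + k) ℓ) x) : ℤ) -
        wt (flipFirst (min (i * k) ℓ) x)| ≤ (k:ℤ) := le_trans hz (by omega)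
    have hR : |(wt (flipFirst (min (i * k + k) ℓ) x) : ℝ) -
        wt (flipFirst (min (i * k) ℓ) x)| ≤ (k:ℝ) := by exact_mod_cast hz2
    rw [hgap]
    simpa [hG, hg, h1] using hR
  -- membership of walk points
  have hmem : ∀ i : ℕ, (min (i * k) ℓ = 0 ∨ min (i * k) ℓ = ℓ ∨
      ∃ j : ℕ, 1 ≤ j ∧ min (i * k) ℓ = j * k ∧ j * k < ℓ) := by
    intro i
    rcases Nat.lt_or_ge (i * k) ℓ with h | h
    · rcases Nat.eq_zero_or_pos i with hi0 | hi1
      · left; simp [hi0]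
      · right; right; exact ⟨i, hi1, by omega, h⟩
    · right; left; omega
  -- case analysis
  by_cases hA : lo ≤ g 0 ∧ g 0 ≤ hi
  · exact ⟨0, Or.inl rfl, hA.1, hA.2⟩
  by_cases hB : lo ≤ g ℓ ∧ g ℓ ≤ hi
  · exact ⟨ℓ, Or.inr (Or.inl rfl), hB.1, hB.2⟩
  push_neg at hA hB
  rcases lt_or_ge (g 0) lo with hlow | hge
  · -- g 0 < lo; then g ℓ ≥ lo
    have hMge : lo ≤ G ℓ := by
      rw [hGM]
      by_contra h
      push_neg at h
      linarith
    obtain ⟨i, _, hGi1, hGi2⟩ := ivt G lo hi ℓ hstep (by rw [hG0]; exact hlow) hMge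
    exact ⟨min (i * k) ℓ, hmem i, hGi1, hGi2⟩
  · -- hi < g 0
    have hhigh : hi < g 0 := hA hge
    have hMle : g ℓ ≤ hi := by
      by_contra h
      push_neg at h
      linarith
    have hstep' : ∀ i < ℓ, |(fun i => -G i) (i+1) - (fun i => -G i) i| ≤ -lo - -hi := by
      intro i hi'
      have h := hstep i hi'
      show |-G (i+1) - -G i| ≤ -lo - -hi
      have e : -G (i+1) - -G i = -(G (i+1) - G i) := by ring
      rw [e, abs_neg]
      linarith
    obtain ⟨i, _, hGi1, hGi2⟩ := ivt (fun i => -G i) (-hi) (-lo) ℓ hstep'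
      (by show -G 0 < -hi; rw [hG0]; linarith) (by show -hi ≤ -G ℓ; rw [hGM]; linarith)
    have hGi1' : -hi ≤ -G i := hGi1
    have hGi2' : -G i ≤ -lo := hGi2
    have hG1 : lo ≤ G i := by linarith
    have hG2 : G i ≤ hi := by linarith
    exact ⟨min (i * k) ℓ, hmem i, hG1, hG2⟩
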